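/- Let X be a complex separable Banach space and let T ∈ B(X) be invertible and transitive (no nontrivial closed invariant subspace). Let x₀ ∈ X be nonzero with 𝔑 ≠ X, where 𝔑 is the closed linear span of {xₙ : n ≥ 1} with xₙ = T^{−n}x₀, and let x₁* ∈ X* satisfy ⟨x₁*, xₙ⟩ = δ₁ₙ for all n ≥ 1. Then 𝔑 is invariant under T⁻¹; the operator V : 𝔑 → X defined by Vx = Tx − ⟨x₁*, x⟩x₀ maps 𝔑 into 𝔑; and with U = T⁻¹|_𝔑 ∈ B(𝔑) one has: (i) ker U = {0} and ran U equals the closed linear span of {xₖ : k ≥ 2}; (ii) ker V = ℂx₁ and ran V = 𝔑; (iii) V∘U = I on 𝔑; (iv) x₁ is a cyclic vector of U, i.e., the closed linear span of {Uᵏx₁ : k ≥ 0} equals 𝔑. -/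

import Mathlib

/-- `𝔑₋ₖ`: the closed linear span of `{S^n x₀ : n ≥ k}` (here `S = T⁻¹`). -/
def closedSpanOrbitFrom {X : Type*} [NormedAddCommGroup X] [NormedSpace ℂ X]
    (S : X →L[ℂ] X) (x₀ : X) (k : ℕ) : Submodule ℂ X :=
  (Submodule.span ℂ {y : X | ∃ n : ℕ, k ≤ n ∧ y = (S ^ n) x₀}).topologicalClosure

/-- `T` is transitive: it has no nontrivial closed invariant subspace. -/
def IsTransitiveOp {X : Type*} [NormedAddCommGroup X] [NormedSpace ℂ X]
    (T : X →L[ℂ] X) : Prop :=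
  ∀ Y : Submodule ℂ X, IsClosed (Y : Set X) → (∀ x ∈ Y, T x ∈ Y) → Y = ⊥ ∨ Y = ⊤

/-- Let `X` be a complex separable Banach space, `T ∈ B(X)` invertible
(with inverse `S`) and transitive, `x₀ ≠ 0` with `𝔑 ≠ X` where `𝔑 = [xₙ : n ≥ 1]`,
`xₙ = T^{−n}x₀ = Sⁿx₀`, and `x₁* ∈ X*` with `⟨x₁*, xₙ⟩ = δ₁ₙ` for `n ≥ 1`.  Then `𝔑` is
invariant under `T⁻¹`; the map `V x = T x − ⟨x₁*, x⟩ x₀` maps `𝔑` into `𝔑`; and for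
`U = T⁻¹|_𝔑`: (i) `ker U = 0` and `ran U = [xₖ : k ≥ 2]`; (ii) `ker V = ℂ x₁` and
`ran V = 𝔑`; (iii) `V ∘ U = I` on `𝔑`; (iv) `x₁` is a cyclic vector of `U`. -/
theorem four_operators_basic_properties
    (X : Type*) [NormedAddCommGroup X] [NormedSpace ℂ X] [CompleteSpace X]
    [TopologicalSpace.SeparableSpace X]
    (T S : X →L[ℂ] X)
    (hTS : T.comp S = ContinuousLinearMap.id ℂ X)
    (hST : S.comp T = ContinuousLinearMap.id ℂ X)
    (htrans : IsTransitiveOp T)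
    (x₀ : X) (hx₀ : x₀ ≠ 0)
    (hN : closedSpanOrbitFrom S x₀ 1 ≠ ⊤)
    (f : X →L[ℂ] ℂ)
    (hf : ∀ n : ℕ, 1 ≤ n → f ((S ^ n) x₀) = if n = 1 then 1 else 0) :
    -- 𝔑 is invariant under T⁻¹ = S
    (∀ x ∈ closedSpanOrbitFrom S x₀ 1, S x ∈ closedSpanOrbitFrom S x₀ 1) ∧
    -- V maps 𝔑 into 𝔑
    (∀ x ∈ closedSpanOrbitFrom S x₀ 1, T x - f x • x₀ ∈ closedSpanOrbitFrom S x₀ 1) ∧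
    -- (i) ker U = {0}
    (∀ x ∈ closedSpanOrbitFrom S x₀ 1, S x = 0 → x = 0) ∧
    -- (i) ran U = [xₖ : k ≥ 2]
    (S '' ((closedSpanOrbitFrom S x₀ 1 : Submodule ℂ X) : Set X) =
      ((closedSpanOrbitFrom S x₀ 2 : Submodule ℂ X) : Set X)) ∧
    -- (ii) ker V = ℂ x₁
    (∀ x ∈ closedSpanOrbitFrom S x₀ 1,
      (T x - f x • x₀ = 0 ↔ ∃ c : ℂ, x = c • S x₀)) ∧
    -- (ii) ran V = 𝔑
    ((fun x => T x - f x • x₀) '' ((closedSpanOrbitFrom S x₀ 1 : Submodule ℂ X) : Set X) =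
      ((closedSpanOrbitFrom S x₀ 1 : Submodule ℂ X) : Set X)) ∧
    -- (iii) V ∘ U = I on 𝔑
    (∀ x ∈ closedSpanOrbitFrom S x₀ 1, T (S x) - f (S x) • x₀ = x) ∧
    -- (iv) x₁ is a cyclic vector of U
    ((Submodule.span ℂ (Set.range fun k : ℕ => (S ^ (k + 1)) x₀)).topologicalClosure =
      closedSpanOrbitFrom S x₀ 1) := by
  have hTS' : ∀ x, T (S x) = x := fun x => by
    simpa using DFunLike.congr_fun hTS x
  have hST' : ∀ x, S (T x) = x := fun x => by
    simpa using DFunLike.congr_fun hST x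
  have hgen : ∀ k n : ℕ, k ≤ n → (S ^ n) x₀ ∈ closedSpanOrbitFrom S x₀ k := fun k n hn =>
    Submodule.le_topologicalClosure _ (Submodule.subset_span ⟨n, hn, rfl⟩)
  have key : ∀ (g : X →L[ℂ] X) (k : ℕ) (M : Submodule ℂ X), IsClosed (M : Set X) →
      (∀ n, k ≤ n → g ((S ^ n) x₀) ∈ M) → ∀ x ∈ closedSpanOrbitFrom S x₀ k, g x ∈ M := by
    intro g k M hM hg x hx
    have h1 : Submodule.span ℂ {y : X | ∃ n : ℕ, k ≤ n ∧ y = (S ^ n) x₀} ≤ M.comap g :=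
      Submodule.span_le.mpr (by rintro y ⟨n, hn, rfl⟩; exact hg n hn)
    exact Submodule.topologicalClosure_minimal _ h1 (hM.preimage g.continuous) hx
  have hclosed : ∀ k, IsClosed ((closedSpanOrbitFrom S x₀ k : Submodule ℂ X) : Set X) :=
    fun k => Submodule.isClosed_topologicalClosure _
  have hSapp : ∀ n : ℕ, S ((S ^ n) x₀) = (S ^ (n + 1)) x₀ := fun n => by
    rw [pow_succ']; rfl
  have hS12 : ∀ x ∈ closedSpanOrbitFrom S x₀ 1, S x ∈ closedSpanOrbitFrom S x₀ 2 := by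
    refine key S 1 _ (hclosed 2) ?_
    intro n hn
    rw [hSapp]
    exact hgen 2 (n + 1) (by omega)
  have hN2le : closedSpanOrbitFrom S x₀ 2 ≤ closedSpanOrbitFrom S x₀ 1 :=
    Submodule.topologicalClosure_mono (Submodule.span_mono
      (by rintro y ⟨n, hn, rfl⟩; exact ⟨n, by omega, rfl⟩))
  have hT21 : ∀ x ∈ closedSpanOrbitFrom S x₀ 2, T x ∈ closedSpanOrbitFrom S x₀ 1 := by
    refine key T 2 _ (hclosed 1) ?_
    intro n hn
    obtain ⟨m, rfl⟩ : ∃ m, n = m + 1 := ⟨n - 1, by omega⟩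
    rw [← hSapp, hTS']
    exact hgen 1 m (by omega)
  have hf2 : ∀ x ∈ closedSpanOrbitFrom S x₀ 2, f x = 0 := by
    intro x hx
    have h1 : Submodule.span ℂ {y : X | ∃ n : ℕ, 2 ≤ n ∧ y = (S ^ n) x₀} ≤ LinearMap.ker f :=
      Submodule.span_le.mpr (by
        rintro y ⟨n, hn, rfl⟩
        have h := hf n (by omega)
        rw [if_neg (by omega : n ≠ 1)] at h
        exact (LinearMap.mem_ker (f := (f : X →ₗ[ℂ] ℂ))).mpr h)
    exact Submodule.topologicalClosure_minimal _ h1 (ContinuousLinearMap.isClosed_ker f) hx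
  have hf1 : f (S x₀) = 1 := by
    have := hf 1 le_rfl
    simpa using this
  have hV : ∀ x ∈ closedSpanOrbitFrom S x₀ 1, T x - f x • x₀ ∈ closedSpanOrbitFrom S x₀ 1 := by
    intro x hx
    have : (T - f.smulRight x₀) x ∈ closedSpanOrbitFrom S x₀ 1 := by
      refine key (T - f.smulRight x₀) 1 _ (hclosed 1) ?_ x hx
      intro n hn
      show T ((S ^ n) x₀) - f ((S ^ n) x₀) • x₀ ∈ closedSpanOrbitFrom S x₀ 1
      rw [hf n hn]
      rcases eq_or_ne n 1 with h | h
      · subst h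
        rw [if_pos rfl, pow_one, hTS', one_smul, sub_self]
        exact Submodule.zero_mem _
      · rw [if_neg h, zero_smul, sub_zero]
        obtain ⟨m, rfl⟩ : ∃ m, n = m + 1 := ⟨n - 1, by omega⟩
        rw [← hSapp, hTS']
        exact hgen 1 m (by omega)
    exact this
  have hiii : ∀ x ∈ closedSpanOrbitFrom S x₀ 1, T (S x) - f (S x) • x₀ = x := by
    intro x hx
    rw [hTS', hf2 (S x) (hS12 x hx), zero_smul, sub_zero]
  refine ⟨fun x hx => hN2le (hS12 x hx), hV, ?_, ?_, ?_, ?_, hiii, ?_⟩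
  · intro x _ hSx
    rw [← hTS' x, hSx, map_zero]
  · apply Set.Subset.antisymm
    · rintro _ ⟨x, hx, rfl⟩
      exact hS12 x hx
    · intro y hy
      exact ⟨T y, hT21 y hy, hST' y⟩
  · intro x hx
    constructor
    · intro h
      refine ⟨f x, ?_⟩
      calc x = S (T x) := (hST' x).symm
      _ = S (f x • x₀) := by rw [sub_eq_zero.mp h]
      _ = f x • S x₀ := map_smul S _ _
    · rintro ⟨c, rfl⟩
      rw [map_smul, map_smul, hTS', hf1, smul_eq_mul, mul_one, sub_self]
  · apply Set.Subset.antisymm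
    · rintro _ ⟨x, hx, rfl⟩
      exact hV x hx
    · intro y hy
      exact ⟨S y, hN2le (hS12 y hy), hiii y hy⟩
  · have hset : (Set.range fun k : ℕ => (S ^ (k + 1)) x₀) =
        {y : X | ∃ n : ℕ, 1 ≤ n ∧ y = (S ^ n) x₀} := by
      ext y
      constructor
      · rintro ⟨k, rfl⟩
        exact ⟨k + 1, by omega, rfl⟩
      · rintro ⟨n, hn, rfl⟩
        exact ⟨n - 1, by show (S ^ (n - 1 + 1)) x₀ = _; rw [Nat.sub_add_cancel hn]⟩
    unfold closedSpanOrbitFrom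
    rw [hset]
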